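/- Let p be prime, x < p, and write Rad(p-1) = k·p₁···p_s where p₁,...,p_s are distinct primes not dividing k. Then N^□(p,x) ≥ Σ_{i=1}^s N^□_{k·p_i}(p,x) − (s−1)·N^□_k(p,x), where N^□_e(p,x) denotes the number of positive integers n ≤ x that are square-free and e-free modulo p, and N^□(p,x) = N^□_{p-1}(p,x) counts square-free primitive roots up to x. -/
import Mathlib


open Finset

/-- An integer `n` coprime to `p` is `e`-free if `n ≡ m ^ d (mod p)` with `d ∣ e`
implies `d = 1`. -/
def IsEFree (p e : ℕ) (n : ℕ) : Prop :=
  ∀ (m : ℤ) (d : ℕ), d ∣ e → (n : ZMod p) = (m : ZMod p) ^ d → d = 1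

open Classical in
/-- `NsqFree p e x` is the number of positive integers `n ≤ x` that are square-free
and `e`-free modulo `p`. -/
noncomputable def NsqFree (p e : ℕ) (x : ℝ) : ℕ :=
  ((Finset.Icc 1 ⌊x⌋₊).filter (fun n => Squarefree n ∧ IsEFree p e n)).card

/-- The radical of `m`: the product of the distinct primes dividing `m`. -/
def rad (m : ℕ) : ℕ := ∏ q ∈ m.primeFactors, q

lemma isEFree_iff_primes {p e n : ℕ} (he : e ≠ 0) :
    IsEFree p e n ↔ ∀ q : ℕ, q.Prime → q ∣ e → ∀ m : ℤ, (n : ZMod p) ≠ (m : ZMod p) ^ q := by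
  constructor
  · intro h q hq hqe m hm
    exact hq.ne_one (h m q hqe hm)
  · intro h m d hde hnd
    by_contra hd1
    obtain ⟨q, hq, c, rfl⟩ := Nat.exists_prime_and_dvd hd1
    refine h q hq (dvd_trans (dvd_mul_right q c) hde) (m ^ c) ?_
    push_cast
    rw [hnd, ← pow_mul, mul_comm]

lemma prime_dvd_rad {q m : ℕ} (hm : m ≠ 0) (hq : q.Prime) : q ∣ rad m ↔ q ∣ m := by
  unfold rad
  rw [hq.prime.dvd_finset_prod_iff]
  constructor
  · rintro ⟨r, hr, hqr⟩
    have := (Nat.prime_of_mem_primeFactors hr)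
    rw [(Nat.prime_dvd_prime_iff_eq hq this).mp hqr]
    exact Nat.dvd_of_mem_primeFactors hr
  · intro hqm
    exact ⟨q, Nat.mem_primeFactors.mpr ⟨hq, hqm, hm⟩, dvd_rfl⟩


/-- Sieving inequality: if `Rad(p-1) = k·p₁⋯p_s` with `p₁,…,p_s` distinct primes not
dividing `k`, then `N^□(p,x) ≥ Σᵢ N^□_{k·pᵢ}(p,x) − (s−1)·N^□_k(p,x)`, where
`N^□(p,x) = N^□_{p-1}(p,x)` counts square-free primitive roots up to `x`. -/
theorem sieve_inequality (p : ℕ) (hp : p.Prime) (x : ℝ) (hxp : x < p)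
    (k s : ℕ) (P : Fin s → ℕ) (hP : ∀ i, (P i).Prime) (hPinj : Function.Injective P)
    (hPk : ∀ i, ¬ P i ∣ k) (hrad : rad (p - 1) = k * ∏ i, P i) :
    (NsqFree p (p - 1) x : ℝ) ≥
      (∑ i, (NsqFree p (k * P i) x : ℝ)) - ((s : ℝ) - 1) * (NsqFree p k x : ℝ) := by
  classical
  have hp1 : p - 1 ≠ 0 := by have := hp.two_le; omega
  have hradne : rad (p - 1) ≠ 0 := by
    unfold rad
    exact Finset.prod_ne_zero_iff.mpr fun q hq => (Nat.prime_of_mem_primeFactors hq).ne_zero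
  have hk0 : k ≠ 0 := fun h => hradne (by rw [hrad, h, zero_mul])
  set Qi : Fin s → ℕ → Prop := fun i n => ∀ m : ℤ, (n : ZMod p) ≠ (m : ZMod p) ^ (P i) with hQi
  -- prime divisor characterization
  have hdvd : ∀ q : ℕ, q.Prime → (q ∣ p - 1 ↔ (q ∣ k ∨ ∃ i, q = P i)) := by
    intro q hq
    rw [← prime_dvd_rad hp1 hq, hrad, hq.dvd_mul, hq.prime.dvd_finset_prod_iff]
    constructor
    · rintro (h | ⟨i, _, hi⟩)
      · exact Or.inl h
      · exact Or.inr ⟨i, (Nat.prime_dvd_prime_iff_eq hq (hP i)).mp hi⟩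
    · rintro (h | ⟨i, rfl⟩)
      · exact Or.inl h
      · exact Or.inr ⟨i, Finset.mem_univ i, dvd_rfl⟩
  have hdvdk : ∀ i (q : ℕ), q.Prime → (q ∣ k * P i ↔ (q ∣ k ∨ q = P i)) := by
    intro i q hq
    rw [hq.dvd_mul, Nat.prime_dvd_prime_iff_eq hq (hP i)]
  -- rewrite e-freeness
  have hEfull : ∀ n, IsEFree p (p - 1) n ↔ (IsEFree p k n ∧ ∀ i, Qi i n) := by
    intro n
    rw [isEFree_iff_primes hp1, isEFree_iff_primes hk0]
    constructor
    · intro h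
      refine ⟨fun q hq hqk => h q hq ((hdvd q hq).mpr (Or.inl hqk)),
        fun i => h (P i) (hP i) ((hdvd (P i) (hP i)).mpr (Or.inr ⟨i, rfl⟩))⟩
    · rintro ⟨h1, h2⟩ q hq hqe
      rcases (hdvd q hq).mp hqe with h | ⟨i, rfl⟩
      · exact h1 q hq h
      · exact h2 i
  have hEi : ∀ i n, IsEFree p (k * P i) n ↔ (IsEFree p k n ∧ Qi i n) := by
    intro i n
    rw [isEFree_iff_primes (Nat.mul_ne_zero hk0 (hP i).ne_zero), isEFree_iff_primes hk0]
    constructor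
    · intro h
      refine ⟨fun q hq hqk => h q hq ((hdvdk i q hq).mpr (Or.inl hqk)),
        h (P i) (hP i) ((hdvdk i (P i) (hP i)).mpr (Or.inr rfl))⟩
    · rintro ⟨h1, h2⟩ q hq hqe
      rcases (hdvdk i q hq).mp hqe with h | rfl
      · exact h1 q hq h
      · exact h2
  -- counting setup
  set A := Finset.Icc 1 ⌊x⌋₊ with hA
  set T := A.filter (fun n => Squarefree n ∧ IsEFree p k n) with hT
  have hcardk : NsqFree p k x = T.card := by
    unfold NsqFree
    exact congrArg Finset.card (Finset.filter_congr fun n _ => Iff.rfl)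
  have hcardfull : NsqFree p (p - 1) x = (T.filter (fun n => ∀ i, Qi i n)).card := by
    unfold NsqFree
    rw [hT, Finset.filter_filter]
    exact congrArg Finset.card (Finset.filter_congr fun n _ => by
      simp only [hEfull n]; tauto)
  have hcardi : ∀ i, NsqFree p (k * P i) x = (T.filter (fun n => Qi i n)).card := by
    intro i
    unfold NsqFree
    rw [hT, Finset.filter_filter]
    exact congrArg Finset.card (Finset.filter_congr fun n _ => by
      simp only [hEi i n]; tauto)
  -- key combinatorial inequality in ℕ
  have hkey : T.card ≤ (T.filter (fun n => ∀ i, Qi i n)).card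
      + ∑ i, (T.filter (fun n => ¬ Qi i n)).card := by
    have hsub : T ⊆ (T.filter (fun n => ∀ i, Qi i n))
        ∪ Finset.univ.biUnion (fun i => T.filter (fun n => ¬ Qi i n)) := by
      intro n hn
      by_cases h : ∀ i, Qi i n
      · exact Finset.mem_union_left _ (Finset.mem_filter.mpr ⟨hn, h⟩)
      · push_neg at h
        obtain ⟨i, hi⟩ := h
        exact Finset.mem_union_right _
          (Finset.mem_biUnion.mpr ⟨i, Finset.mem_univ i, Finset.mem_filter.mpr ⟨hn, hi⟩⟩)
    calc T.card ≤ _ := Finset.card_le_card hsub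
      _ ≤ (T.filter (fun n => ∀ i, Qi i n)).card
          + (Finset.univ.biUnion (fun i => T.filter (fun n => ¬ Qi i n))).card :=
        Finset.card_union_le _ _
      _ ≤ _ := by gcongr; exact Finset.card_biUnion_le
  have hcompl : ∀ i, (T.filter (fun n => Qi i n)).card
      + (T.filter (fun n => ¬ Qi i n)).card = T.card := fun i =>
    Finset.card_filter_add_card_filter_not _
  have hle : ∀ i, (T.filter (fun n => Qi i n)).card ≤ T.card := fun i =>
    Finset.card_filter_le _ _
  -- pass to ℝ
  rw [hcardfull, hcardk]
  have hsum : ∀ i, ((T.filter (fun n => ¬ Qi i n)).card : ℝ)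
      = (T.card : ℝ) - ((T.filter (fun n => Qi i n)).card : ℝ) := by
    intro i
    have := hcompl i
    push_cast [← this]
    ring
  have hreal : (T.card : ℝ) ≤ ((T.filter (fun n => ∀ i, Qi i n)).card : ℝ)
      + ∑ i, ((T.card : ℝ) - ((T.filter (fun n => Qi i n)).card : ℝ)) := by
    calc (T.card : ℝ) ≤ (((T.filter (fun n => ∀ i, Qi i n)).card
        + ∑ i, (T.filter (fun n => ¬ Qi i n)).card : ℕ) : ℝ) := by exact_mod_cast hkey
      _ = _ := by push_cast [hsum]; ring
  have hsum2 : (∑ i, (NsqFree p (k * P i) x : ℝ))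
      = ∑ i, ((T.filter (fun n => Qi i n)).card : ℝ) := by
    refine Finset.sum_congr rfl fun i _ => by rw [hcardi i]
  rw [hsum2]
  rw [Finset.sum_sub_distrib, Finset.sum_const, Finset.card_univ, Fintype.card_fin] at hreal
  simp only [nsmul_eq_mul] at hreal
  linarith
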